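/- For a semibrick S in an exact category E, the simple objects of the abelian category Filt(S) are exactly the objects of S, and Filt(S) is a length abelian category (every object has a finite filtration by simples). -/

import Mathlib

open CategoryTheory CategoryTheory.Limits

universe v u

/-- A Quillen exact structure on an additive category `E`: a class of
kernel-cokernel pairs ("conflations"), closed under isomorphisms, containing
the trivial conflations, with inflations and deflations closed under
composition, pushouts of inflations and pullbacks of deflations existing and
again inflations/deflations. -/
structure ExactStruct (E : Type u) [Category.{v} E] [HasZeroMorphisms E] where
  conf : ∀ ⦃X Y Z : E⦄, (X ⟶ Y) → (Y ⟶ Z) → Prop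
  conf_comp : ∀ ⦃X Y Z : E⦄ {f : X ⟶ Y} {g : Y ⟶ Z}, conf f g → f ≫ g = 0
  conf_isKernel : ∀ ⦃X Y Z : E⦄ {f : X ⟶ Y} {g : Y ⟶ Z} (h : conf f g),
    Nonempty (IsLimit (KernelFork.ofι f (conf_comp h)))
  conf_isCokernel : ∀ ⦃X Y Z : E⦄ {f : X ⟶ Y} {g : Y ⟶ Z} (h : conf f g),
    Nonempty (IsColimit (CokernelCofork.ofπ g (conf_comp h)))
  conf_iso : ∀ ⦃X Y Z X' Y' Z' : E⦄ {f : X ⟶ Y} {g : Y ⟶ Z} {f' : X' ⟶ Y'} {g' : Y' ⟶ Z'}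
    (α : X ≅ X') (β : Y ≅ Y') (γ : Z ≅ Z'),
    conf f g → f ≫ β.hom = α.hom ≫ f' → g ≫ γ.hom = β.hom ≫ g' → conf f' g'
  conf_id_left : ∀ (X Z : E), IsZero Z → conf (𝟙 X) (0 : X ⟶ Z)
  conf_id_right : ∀ (Z X : E), IsZero Z → conf (0 : Z ⟶ X) (𝟙 X)
  infl_comp : ∀ ⦃X Y W : E⦄ {f : X ⟶ Y} {f' : Y ⟶ W},
    (∃ (Z : E) (g : Y ⟶ Z), conf f g) → (∃ (Z : E) (g : W ⟶ Z), conf f' g) →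
    ∃ (Z : E) (g : W ⟶ Z), conf (f ≫ f') g
  defl_comp : ∀ ⦃X Y W : E⦄ {g : X ⟶ Y} {g' : Y ⟶ W},
    (∃ (Z : E) (f : Z ⟶ X), conf f g) → (∃ (Z : E) (f : Z ⟶ Y), conf f g') →
    ∃ (Z : E) (f : Z ⟶ X), conf f (g ≫ g')
  infl_pushout : ∀ ⦃X Y X' : E⦄ (f : X ⟶ Y) (t : X ⟶ X'),
    (∃ (Z : E) (g : Y ⟶ Z), conf f g) →
    ∃ (P : E) (inl : Y ⟶ P) (inr : X' ⟶ P),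
      IsPushout f t inl inr ∧ ∃ (Z : E) (g : P ⟶ Z), conf inr g
  defl_pullback : ∀ ⦃Y Z T : E⦄ (d : Y ⟶ Z) (t : T ⟶ Z),
    (∃ (X : E) (f : X ⟶ Y), conf f d) →
    ∃ (P : E) (p1 : P ⟶ Y) (p2 : P ⟶ T),
      IsPullback p1 p2 d t ∧ ∃ (X : E) (f : X ⟶ P), conf f p2

namespace ExactStruct

variable {E : Type u} [Category.{v} E] [HasZeroMorphisms E]

/-- `f` is an inflation (admissible monic): the first map of some conflation. -/
def Inflation (S : ExactStruct E) {X Y : E} (f : X ⟶ Y) : Prop :=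
  ∃ (Z : E) (g : Y ⟶ Z), S.conf f g

/-- `g` is a deflation (admissible epic): the second map of some conflation. -/
def Deflation (S : ExactStruct E) {Y Z : E} (g : Y ⟶ Z) : Prop :=
  ∃ (X : E) (f : X ⟶ Y), S.conf f g

end ExactStruct

/-- `FiltLenP conf C n X` : `X` admits a `C`-filtration of length `n` w.r.t. the
conflation class `conf`, i.e. a chain of inflations `0 = X₀ ↣ ⋯ ↣ Xₙ = X` whose
successive cokernels lie in `C`. -/
inductive FiltLenP {E : Type u} [Category.{v} E]
    (conf : ∀ ⦃X Y Z : E⦄, (X ⟶ Y) → (Y ⟶ Z) → Prop) (C : Set E) : ℕ → E → Prop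
  | zero (X : E) : IsZero X → FiltLenP conf C 0 X
  | step {X Y c : E} (n : ℕ) (f : X ⟶ Y) (g : Y ⟶ c) :
      FiltLenP conf C n X → c ∈ C → conf f g → FiltLenP conf C (n + 1) Y

namespace ExactStruct

variable {E : Type u} [Category.{v} E] [HasZeroMorphisms E]

/-- `Filt C` : the objects admitting a finite `C`-filtration. -/
def Filt (S : ExactStruct E) (C : Set E) : Set E :=
  {X | ∃ n, FiltLenP S.conf C n X}

/-- The conflations of the exact structure induced on the subcategory `W`. -/
def confIn (S : ExactStruct E) (W : Set E) :
    ∀ ⦃X Y Z : E⦄, (X ⟶ Y) → (Y ⟶ Z) → Prop :=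
  fun X Y Z f g => S.conf f g ∧ X ∈ W ∧ Y ∈ W ∧ Z ∈ W

/-- A simple object of the exact category `E`. -/
def Simple (S : ExactStruct E) (M : E) : Prop :=
  ¬ IsZero M ∧ ∀ ⦃L N : E⦄ (f : L ⟶ M) (g : M ⟶ N), S.conf f g → IsZero L ∨ IsZero N

/-- A simple object of the extension-closed subcategory `W` with its induced
exact structure. -/
def SimpleIn (S : ExactStruct E) (W : Set E) (M : E) : Prop :=
  M ∈ W ∧ ¬ IsZero M ∧
    ∀ ⦃L N : E⦄ (f : L ⟶ M) (g : M ⟶ N), S.confIn W f g → IsZero L ∨ IsZero N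

/-- `E` is a length exact category: every object has a finite filtration with
simple subquotients. -/
def IsLength (S : ExactStruct E) : Prop :=
  ∀ X : E, ∃ n, FiltLenP S.conf {M | S.Simple M} n X

/-- The subcategory `W` (with its induced exact structure) is length. -/
def IsLengthIn (S : ExactStruct E) (W : Set E) : Prop :=
  ∀ X ∈ W, ∃ n, FiltLenP (S.confIn W) {M | S.SimpleIn W M} n X

/-- The inclusion of the full subcategory `W` into `E` is exact: every short
exact sequence in (the abelian category) `W` is a conflation of `E`. -/
def InclusionExact (S : ExactStruct E) (W : Set E)
    [Abelian (ObjectProperty.FullSubcategory fun X => X ∈ W)] : Prop :=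
  ∀ (A B C : ObjectProperty.FullSubcategory fun X => X ∈ W) (f : A ⟶ B) (g : B ⟶ C)
    (w : f ≫ g = 0), (ShortComplex.mk f g w).ShortExact → S.conf f.hom g.hom

/-- `W` is a wide subcategory of `E`: closed under extensions, abelian, and the
inclusion is exact. -/
def IsWide (S : ExactStruct E) (W : Set E) : Prop :=
  (∀ ⦃X Y Z : E⦄ (f : X ⟶ Y) (g : Y ⟶ Z), S.conf f g → X ∈ W → Z ∈ W → Y ∈ W) ∧
  ∃ inst : Abelian (ObjectProperty.FullSubcategory fun X => X ∈ W),
    @InclusionExact E _ _ S W inst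

end ExactStruct

/-- A brick: a nonzero object all of whose nonzero endomorphisms are
isomorphisms (i.e. the endomorphism ring is a division ring). -/
def Brick {E : Type u} [Category.{v} E] [HasZeroMorphisms E] (X : E) : Prop :=
  𝟙 X ≠ 0 ∧ ∀ f : X ⟶ X, f ≠ 0 → IsIso f

/-- A semibrick: a set of bricks which are pairwise Hom-orthogonal
(no nonzero morphisms between non-isomorphic members). -/
def Semibrick {E : Type u} [Category.{v} E] [HasZeroMorphisms E] (𝒮 : Set E) : Prop :=
  (∀ X ∈ 𝒮, Brick X) ∧
  ∀ X ∈ 𝒮, ∀ Y ∈ 𝒮, IsEmpty (X ≅ Y) → ∀ f : X ⟶ Y, f = 0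

/-- A class of objects closed under isomorphisms. -/
def IsoClosed {E : Type u} [Category.{v} E] (C : Set E) : Prop :=
  ∀ X Y : E, Nonempty (X ≅ Y) → X ∈ C → Y ∈ C

/-- Composite of a chain of morphisms `obj i ⟶ obj (i+1)`. -/
def comps {E : Type u} [Category.{v} E] (obj : ℕ → E)
    (ι : ∀ i, obj i ⟶ obj (i + 1)) (i : ℕ) : ∀ j, obj i ⟶ obj (i + j)
  | 0 => 𝟙 _
  | j + 1 => comps obj ι i j ≫ ι (i + j)

section AuxLemmas

variable {E : Type u} [Category.{v} E] [HasZeroMorphisms E] [HasZeroObject E]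

/-- Anything isomorphic to a member of `𝒮` lies in `Filt 𝒮`. -/
lemma filt_mem_of_iso (S : ExactStruct E) {𝒮 : Set E} {X s : E} (hs : s ∈ 𝒮)
    (e : X ≅ s) : X ∈ S.Filt 𝒮 := by
  obtain ⟨Z, hZ⟩ := HasZeroObject.zero (C := E)
  have h1 : S.conf (0 : Z ⟶ X) (𝟙 X) := S.conf_id_right _ _ hZ
  have h2 : S.conf (0 : Z ⟶ X) e.hom :=
    S.conf_iso (Iso.refl _) (Iso.refl X) e h1 (by simp) (by simp)
  exact ⟨1, FiltLenP.step 0 _ e.hom (FiltLenP.zero _ hZ) hs h2⟩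

/-- Key lemma: anything isomorphic to a member of a semibrick `𝒮` is a
simple object of `Filt 𝒮`. -/
lemma simpleIn_filt (S : ExactStruct E) {𝒮 : Set E} (h𝒮 : Semibrick 𝒮)
    {X s : E} (hs : s ∈ 𝒮) (e : X ≅ s) : S.SimpleIn (S.Filt 𝒮) X := by
  refine ⟨filt_mem_of_iso S hs e, ?_, ?_⟩
  · intro h
    exact (h𝒮.1 s hs).1 ((h.of_iso e.symm).eq_of_src (𝟙 s) 0)
  · rintro L N f g ⟨hconf, hL, hX, hN⟩
    -- transport the conflation along `e` to get a conflation `L ↣ s ↠ N`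
    have hconf' : S.conf (f ≫ e.hom) (e.inv ≫ g) :=
      S.conf_iso (Iso.refl L) e (Iso.refl N) hconf (by simp) (by simp)
    obtain ⟨n, hNfilt⟩ := hN
    cases hNfilt with
    | zero _ h0 => exact Or.inr h0
    | step m f₀ g₀ hfilt hc hconf₀ =>
      -- `g₀ : N ⟶ c` is a deflation with `c ∈ 𝒮`; compose to a deflation `s ↠ c`
      obtain ⟨X₁, f₁, hconf₁⟩ :=
        S.defl_comp ⟨L, f ≫ e.hom, hconf'⟩ ⟨_, f₀, hconf₀⟩
      set d := (e.inv ≫ g) ≫ g₀ with hd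
      -- the deflation `d : s ⟶ c` is nonzero since `c` is a nonzero brick
      have hd0 : d ≠ 0 := by
        intro h0
        have hc0 : 𝟙 _ = (0 : _ ⟶ _) :=
          Cofork.IsColimit.hom_ext (S.conf_isCokernel hconf₁).some (by simp [h0])
        exact (h𝒮.1 _ hc).1 hc0
      -- by the semibrick property `s ≅ c`, and then `d` is an isomorphism
      obtain ⟨i⟩ := not_isEmpty_iff.mp (fun h => hd0 (h𝒮.2 s hs _ hc h d))
      have hdi : d ≫ i.inv ≠ 0 := by
        intro h0
        apply hd0
        rw [show d = (d ≫ i.inv) ≫ i.hom by simp, h0, zero_comp]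
      haveI : IsIso (d ≫ i.inv) := (h𝒮.1 s hs).2 _ hdi
      haveI : IsIso d := by
        rw [show d = (d ≫ i.inv) ≫ i.hom by simp]
        infer_instance
      -- hence `e.inv ≫ g` is monic, so the kernel `L` is zero
      haveI : Mono (e.inv ≫ g) := mono_of_mono (e.inv ≫ g) g₀
      have hf0 : f ≫ e.hom = 0 :=
        zero_of_comp_mono (e.inv ≫ g) (S.conf_comp hconf')
      refine Or.inl ?_
      rw [IsZero.iff_id_eq_zero]
      exact Fork.IsLimit.hom_ext (S.conf_isKernel hconf').some (by simp [hf0])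

end AuxLemmas

/-- For a semibrick `𝒮`, the simple objects of `Filt 𝒮`
(with its induced exact structure, which is the standard abelian one) are
exactly the objects isomorphic to members of `𝒮`, and `Filt 𝒮` is length:
every object has a finite filtration by its simple objects. -/
theorem filt_semibrick_simples_and_length {E : Type u} [Category.{v} E] [Preadditive E]
    [HasZeroObject E] [HasBinaryBiproducts E] (S : ExactStruct E)
    {𝒮 : Set E} (h𝒮 : Semibrick 𝒮) :
    (∀ X : E, S.SimpleIn (S.Filt 𝒮) X ↔ ∃ s ∈ 𝒮, Nonempty (X ≅ s)) ∧
      S.IsLengthIn (S.Filt 𝒮) := by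
  constructor
  · intro X
    constructor
    · rintro ⟨⟨n, hfilt⟩, hX0, hsimp⟩
      cases hfilt with
      | zero _ h0 => exact absurd h0 hX0
      | step m f₀ g₀ hfilt' hc hconf₀ =>
        refine ⟨_, hc, ?_⟩
        have hmem : S.confIn (S.Filt 𝒮) f₀ g₀ :=
          ⟨hconf₀, ⟨m, hfilt'⟩, ⟨m + 1, FiltLenP.step m f₀ g₀ hfilt' hc hconf₀⟩,
            filt_mem_of_iso S hc (Iso.refl _)⟩
        rcases hsimp f₀ g₀ hmem with hL | hN
        · -- the penultimate term is zero, so `g₀ : X ⟶ c` is an isomorphism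
          have hf0 : f₀ = 0 := hL.eq_of_src f₀ 0
          obtain ⟨u, hu⟩ := Cofork.IsColimit.desc' (S.conf_isCokernel hconf₀).some
            (𝟙 X) (by simp [hf0])
          simp only [Cofork.π_ofπ] at hu
          have hu2 : u ≫ g₀ = 𝟙 _ :=
            Cofork.IsColimit.hom_ext (S.conf_isCokernel hconf₀).some
              (by simp [reassoc_of% hu])
          exact ⟨Iso.mk g₀ u hu hu2⟩
        · exact absurd (hN.eq_of_src (𝟙 _) 0) (h𝒮.1 _ hc).1
    · rintro ⟨s, hs, ⟨e⟩⟩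
      exact simpleIn_filt S h𝒮 hs e
  · rintro X ⟨n, hfilt⟩
    refine ⟨n, ?_⟩
    induction hfilt with
    | zero X h0 => exact FiltLenP.zero X h0
    | step m f g hfilt hc hconf ih =>
      exact FiltLenP.step m f g ih (simpleIn_filt S h𝒮 hc (Iso.refl _))
        ⟨hconf, ⟨m, hfilt⟩, ⟨m + 1, FiltLenP.step m f g hfilt hc hconf⟩,
          filt_mem_of_iso S hc (Iso.refl _)⟩
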